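/- Let R be a differentiably simple commutative ring and S ⊆ R a subring such that R is a free S-module. Then S is differentiably simple. -/

import Mathlib

/-- An ideal is *differential* if it is stable under every derivation of the ring. -/
def Ideal.IsDifferential {R : Type*} [CommRing R] (I : Ideal R) : Prop :=
  ∀ D : Derivation ℤ R R, ∀ x ∈ I, D x ∈ I

/-- A commutative ring is *differentiably simple* if its only differential ideals
are `⊥` and `⊤`. -/
def IsDifferentiablySimple (R : Type*) [CommRing R] : Prop :=
  ∀ I : Ideal R, I.IsDifferential → I = ⊥ ∨ I = ⊤

/-- Membership in the extension of an ideal along a free subring, via coordinates. -/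
lemma mem_map_subtype_iff {R : Type*} [CommRing R] (S : Subring R) (J : Ideal S)
    {ι : Type*} (b : Module.Basis ι S R) (x : R) :
    x ∈ J.map S.subtype ↔ ∀ i, b.repr x i ∈ J := by
  constructor
  · intro hx
    rw [Ideal.map] at hx
    refine Submodule.span_induction ?_ ?_ ?_ ?_ hx
    · rintro y ⟨j, hj, rfl⟩ i
      have : (S.subtype j : R) = j • (1 : R) := by
        rw [Subring.smul_def, smul_eq_mul, mul_one]; rfl
      rw [this, map_smul]
      exact J.mul_mem_right _ hj
    · intro i; simp
    · intro y z _ _ hy hz i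
      rw [map_add]
      exact J.add_mem (hy i) (hz i)
    · intro r y _ hy j
      have hx : (Finsupp.linearCombination S (b : ι → R)) (b.repr y) = y := b.linearCombination_repr y
      rw [Finsupp.linearCombination_apply] at hx
      have : r • y = (b.repr y).sum fun i c => c • (r • b i) := by
        conv_lhs => rw [← hx]
        rw [Finsupp.smul_sum]
        exact Finsupp.sum_congr fun i _ => smul_comm _ _ _
      rw [this, Finsupp.sum, map_sum, Finsupp.finset_sum_apply]
      refine Submodule.sum_mem _ fun i hi => ?_
      rw [map_smul, Finsupp.smul_apply, smul_eq_mul]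
      exact J.mul_mem_right _ (hy i)
  · intro h
    have hx : (Finsupp.linearCombination S (b : ι → R)) (b.repr x) = x := b.linearCombination_repr x
    rw [Finsupp.linearCombination_apply] at hx
    rw [← hx, Finsupp.sum]
    refine Submodule.sum_mem _ fun i hi => ?_
    rw [Subring.smul_def, smul_eq_mul]
    exact Ideal.mul_mem_right _ _ (Ideal.mem_map_of_mem S.subtype (h i))

theorem stmt7 (R : Type*) [CommRing R] (hR : IsDifferentiablySimple R)
    (S : Subring R) (hfree : Module.Free S R) :
    IsDifferentiablySimple S := by
  classical
  intro J hJ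
  obtain ⟨⟨ι, b⟩⟩ := hfree
  -- for each derivation of R and index i, a derivation of S
  have hder : ∀ (D : Derivation ℤ R R) (i : ι) (s : S), s ∈ J → b.repr (D s) i ∈ J := by
    intro D i s hs
    let f : S →+ S :=
      { toFun := fun s => b.repr (D s) i
        map_zero' := by simp
        map_add' := by intro s t; push_cast; simp }
    let d : Derivation ℤ S S :=
      { toLinearMap := f.toIntLinearMap
        map_one_eq_zero' := by
          show b.repr (D ((1 : S) : R)) i = 0
          simp
        leibniz' := by
          intro s t
          show b.repr (D ((s * t : S) : R)) i
              = s • (b.repr (D (t : S) : R) i) + t • (b.repr (D (s : S) : R) i)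
          have hc : ((s * t : S) : R) = (s : R) * (t : R) := rfl
          have h1 : (s : R) • (D (t : R)) = s • (D (t : R)) := rfl
          have h2 : (t : R) • (D (s : R)) = t • (D (s : R)) := rfl
          rw [hc, D.leibniz, h1, h2, map_add, map_smul, map_smul, Finsupp.add_apply,
            Finsupp.smul_apply, Finsupp.smul_apply] }
    exact hJ d s hs
  have hIdiff : (J.map S.subtype).IsDifferential := by
    intro D x hx
    have hco : ∀ i, b.repr x i ∈ J := (mem_map_subtype_iff S J b x).1 hx
    have hx' : (Finsupp.linearCombination S (b : ι → R)) (b.repr x) = x := b.linearCombination_repr x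
    rw [Finsupp.linearCombination_apply] at hx'
    have key : D x = (b.repr x).sum fun i c => ((c : R)) * D (b i) + (b i) * D ((c : R)) := by
      conv_lhs => rw [← hx']
      rw [Finsupp.sum, map_sum]
      refine Finset.sum_congr rfl fun i _ => ?_
      have h1 : (b.repr x i) • b i = ((b.repr x i : R)) * b i := rfl
      rw [h1, D.leibniz, smul_eq_mul, smul_eq_mul]
    rw [key, Finsupp.sum]
    refine Submodule.sum_mem _ fun i hi => ?_
    refine Ideal.add_mem _ ?_ ?_
    · exact Ideal.mul_mem_right _ _ (Ideal.mem_map_of_mem S.subtype (hco i))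
    · refine Ideal.mul_mem_left _ _ ?_
      rw [mem_map_subtype_iff S J b]
      intro k
      exact hder D k _ (hco i)
  rcases hR (J.map S.subtype) hIdiff with h | h
  · left
    ext s
    simp only [Ideal.mem_bot]
    constructor
    · intro hs
      have : (s : R) ∈ J.map S.subtype := Ideal.mem_map_of_mem S.subtype hs
      rw [h, Ideal.mem_bot] at this
      exact Subtype.ext this
    · rintro rfl; exact J.zero_mem
  · right
    by_cases hne : Nonempty ι
    · obtain ⟨i⟩ := hne
      have : b i ∈ J.map S.subtype := h ▸ Submodule.mem_top
      rw [mem_map_subtype_iff S J b] at this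
      have := this i
      rw [b.repr_self, Finsupp.single_eq_same] at this
      exact Ideal.eq_top_of_isUnit_mem _ this isUnit_one
    · -- ι empty: R is trivial, hence S is trivial
      rw [not_nonempty_iff] at hne
      have : Subsingleton R :=
        ⟨fun x y => b.repr.injective (Subsingleton.elim _ _)⟩
      have : (1 : S) = 0 := Subtype.ext (Subsingleton.elim _ _)
      exact Ideal.eq_top_of_isUnit_mem _ (this ▸ J.zero_mem) isUnit_one
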